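/- Parity symmetry of the quantum baker matrix: let P be the N×N permutation matrix with P_{nm} = 1 if n ≡ −m (mod N) and P_{nm} = 0 otherwise. Then P·𝖡·P = 𝖡. -/

import Mathlib

noncomputable section

noncomputable section

/-- Entry of the `M × M` discrete Fourier transform matrix: `M^{-1/2} e^{-2πiab/M}`. -/
def dftEntry (M a b : ℕ) : ℂ :=
  ((Real.sqrt M : ℝ) : ℂ)⁻¹ * Complex.exp (-(2 * Real.pi * Complex.I * a * b) / M)

/-- The `N × N` discrete Fourier transform matrix `(𝓕^N)_{mn} = N^{-1/2} e^{-2πimn/N}`. -/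
def dftMatrix (N : ℕ) : Matrix (Fin N) (Fin N) ℂ :=
  Matrix.of fun m n : Fin N => dftEntry N m n

/-- The diagonal phase matrix `Z` with `Z_{nn} = e^{iπn/N}`. -/
def Zmat (N : ℕ) : Matrix (Fin N) (Fin N) ℂ :=
  Matrix.diagonal fun n : Fin N => Complex.exp (Real.pi * Complex.I * (n : ℕ) / N)

/-- The block-diagonal matrix `D` with upper-left block `𝓕^{N/2}` and lower-right block
`−𝓕^{N/2}`. -/
def Dmat (N : ℕ) : Matrix (Fin N) (Fin N) ℂ :=
  Matrix.of fun m n : Fin N =>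
    if (m : ℕ) < N / 2 ∧ (n : ℕ) < N / 2 then dftEntry (N / 2) m n
    else if N / 2 ≤ (m : ℕ) ∧ N / 2 ≤ (n : ℕ) then
      -dftEntry (N / 2) ((m : ℕ) - N / 2) ((n : ℕ) - N / 2)
    else 0

/-- The quantum baker matrix `𝖡 = Z (𝓕^N)⁻¹ D Z⁻²`. -/
def bakerMatrix (N : ℕ) : Matrix (Fin N) (Fin N) ℂ :=
  Zmat N * (dftMatrix N)⁻¹ * Dmat N * (Zmat N ^ 2)⁻¹

/-- The parity permutation matrix `P` with `P_{nm} = 1` if `n ≡ −m (mod N)`, else `0`. -/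
def parityPermMatrix (N : ℕ) : Matrix (Fin N) (Fin N) ℂ :=
  Matrix.of fun n m : Fin N => if ((n : ℕ) + (m : ℕ)) % N = 0 then 1 else 0

namespace BQtest

def ζ (N : ℕ) : ℂ := Complex.exp (Real.pi * Complex.I / N)

lemma zeta_ne_zero (N : ℕ) : ζ N ≠ 0 := Complex.exp_ne_zero _

lemma zeta_zpow (N : ℕ) (t : ℤ) : ζ N ^ t = Complex.exp (Real.pi * Complex.I * t / N) := by
  rw [ζ, ← Complex.exp_int_mul]; congr 1; ring

lemma zeta_pow_N (N : ℕ) (hN : 0 < N) : ζ N ^ (N : ℤ) = -1 := by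
  have hN' : (N : ℂ) ≠ 0 := Nat.cast_ne_zero.2 hN.ne'
  rw [zeta_zpow]
  rw [show Real.pi * Complex.I * ((N:ℤ) : ℂ) / N = Real.pi * Complex.I by
    push_cast; field_simp]
  exact Complex.exp_pi_mul_I

lemma zeta_two_zpow_eq_one_iff (N : ℕ) (hN : 0 < N) (t : ℤ) :
    ζ N ^ (2 * t) = 1 ↔ (N : ℤ) ∣ t := by
  have hN' : (N : ℂ) ≠ 0 := Nat.cast_ne_zero.2 hN.ne'
  have hπ : (Real.pi : ℂ) ≠ 0 := by exact_mod_cast Real.pi_ne_zero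
  have hI := Complex.I_ne_zero
  rw [zeta_zpow, Complex.exp_eq_one_iff]
  constructor
  · rintro ⟨k, hk⟩
    refine ⟨k, ?_⟩
    push_cast at hk
    have h3 : (2 * (Real.pi:ℂ) * Complex.I) * (t : ℂ)
        = (2 * (Real.pi:ℂ) * Complex.I) * ((k : ℂ) * N) := by
      field_simp at hk
      linear_combination (2 * (Real.pi:ℂ) * Complex.I) * hk
    have h4 := mul_left_cancel₀ (by simp [hπ, hI] : (2 * (Real.pi:ℂ) * Complex.I) ≠ 0) h3
    have h5 : t = k * (N:ℤ) := by exact_mod_cast h4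
    rw [h5, mul_comm]
  · rintro ⟨k, rfl⟩
    refine ⟨k, ?_⟩
    push_cast
    field_simp

/-- `ζ^(N*s) = (-1)^s`. -/
lemma zeta_zpow_N_mul (N : ℕ) (hN : 0 < N) (s : ℤ) : ζ N ^ ((N:ℤ) * s) = (-1) ^ s := by
  rw [zpow_mul, zeta_pow_N N hN]

/-- exponent shift by multiples of `2N` -/
lemma zeta_congr (N : ℕ) (hN : 0 < N) (e1 e2 c : ℤ) (h : e1 = e2 + (2*(N:ℤ))*c) :
    ζ N ^ e1 = ζ N ^ e2 := by
  have hz := zeta_ne_zero N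
  rw [h, zpow_add₀ hz, show (2*(N:ℤ))*c = (N:ℤ)*(2*c) by ring, zeta_zpow_N_mul N hN,
    Even.neg_one_zpow ⟨c, by ring⟩, mul_one]

def hsum (N M : ℕ) (t : ℤ) : ℂ := ∑ k ∈ Finset.range M, (ζ N ^ (2*t)) ^ k

lemma hsum_mul (N M : ℕ) (hM : N = 2*M) (hM0 : 0 < M) (t : ℤ) :
    hsum N M t * (ζ N ^ (2*t) - 1) = (-1) ^ t - 1 := by
  have hN : 0 < N := by omega
  rw [hsum, geom_sum_mul]
  congr 1
  rw [← zpow_natCast (ζ N ^ (2*t)) M, ← zpow_mul,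
    show 2*t*(M:ℤ) = (N:ℤ)*t by push_cast [hM]; ring, zeta_zpow_N_mul N hN]

lemma hsum_of_dvd (N M : ℕ) (hN : 0 < N) (t : ℤ) (h : (N:ℤ) ∣ t) :
    hsum N M t = (M : ℂ) := by
  have hone := (zeta_two_zpow_eq_one_iff N hN t).2 h
  simp [hsum, hone]

lemma hsum_even_eq_zero (N M : ℕ) (hM : N = 2*M) (hM0 : 0 < M) (t : ℤ) (ht : t % 2 = 0)
    (h : ¬ (N:ℤ) ∣ t) : hsum N M t = 0 := by
  have hN : 0 < N := by omega
  have h1 : ζ N ^ (2*t) ≠ 1 := fun hc => h ((zeta_two_zpow_eq_one_iff N hN t).1 hc)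
  have h2 := hsum_mul N M hM hM0 t
  rw [Even.neg_one_zpow (Int.even_iff.2 ht), sub_self] at h2
  exact (mul_eq_zero.1 h2).resolve_right (sub_ne_zero.2 h1)

lemma zeta_two_zpow_ne_one_of_odd (N M : ℕ) (hM : N = 2*M) (hM0 : 0 < M) (t : ℤ) (ht : t % 2 = 1) :
    ζ N ^ (2*t) ≠ 1 := by
  intro hc
  have hN : 0 < N := by omega
  obtain ⟨c, hc2⟩ := (zeta_two_zpow_eq_one_iff N hN t).1 hc
  have : t % 2 = 0 := by
    have : t = 2*((M:ℤ)*c) := by rw [hc2]; push_cast [hM]; ring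
    omega
  omega

def rr (M : ℕ) : ℂ := ((Real.sqrt M : ℝ) : ℂ)⁻¹

def SS (M a b : ℕ) : ℂ := if b < M then rr M else -((-1:ℂ) ^ a) * rr M

lemma oddStep (N M : ℕ) (hM : N = 2*M) (hM0 : 0 < M) (t t' : ℤ) (hto : t % 2 = 1)
    (hcase : t' = -t + N ∨ t' = -t - N) :
    ζ N ^ t' * (rr M * hsum N M t') = ζ N ^ t * (rr M * hsum N M t) := by
  have hN : 0 < N := by omega
  have hz := zeta_ne_zero N
  have ht'o : t' % 2 = 1 := by rcases hcase with h|h <;> omega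
  have hx : ζ N ^ (2*t) ≠ 1 := zeta_two_zpow_ne_one_of_odd N M hM hM0 t hto
  have hx' : ζ N ^ (2*t') ≠ 1 := zeta_two_zpow_ne_one_of_odd N M hM hM0 t' ht'o
  have hst : hsum N M t = -2 / (ζ N ^ (2*t) - 1) := by
    rw [eq_div_iff (sub_ne_zero.2 hx), hsum_mul N M hM hM0,
      Odd.neg_one_zpow (Int.odd_iff.2 hto)]
    ring
  have hst' : hsum N M t' = -2 / (ζ N ^ (2*t') - 1) := by
    rw [eq_div_iff (sub_ne_zero.2 hx'), hsum_mul N M hM hM0,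
      Odd.neg_one_zpow (Int.odd_iff.2 ht'o)]
    ring
  have e1 : ζ N ^ t' = -(ζ N ^ (-t)) := by
    rcases hcase with h|h <;> rw [h]
    · rw [zpow_add₀ hz, zeta_pow_N N hN]; ring
    · rw [zpow_sub₀ hz, zeta_pow_N N hN, div_neg, div_one]
  have e2 : ζ N ^ (2*t') = ζ N ^ (-(2*t)) := by
    rcases hcase with h|h <;> rw [h]
    · exact zeta_congr N hN _ _ 1 (by ring)
    · exact zeta_congr N hN _ _ (-1) (by ring)
  rw [hst, hst', e1, e2]
  have hu : ζ N ^ t ≠ 0 := zpow_ne_zero _ hz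
  have h2t : ζ N ^ (2*t) = ζ N ^ t * ζ N ^ t := by
    rw [← zpow_add₀ hz]; ring_nf
  rw [h2t] at hx ⊢
  rw [show -(2*t) = -(t + t) by ring, zpow_neg, zpow_neg, zpow_add₀ hz] at *
  have hxi : (ζ N ^ t * ζ N ^ t)⁻¹ ≠ 1 := fun hcon => hx (by rwa [inv_eq_one] at hcon)
  have hA : ζ N ^ t * ζ N ^ t - 1 ≠ 0 := sub_ne_zero.2 hx
  have hB : (ζ N ^ t * ζ N ^ t)⁻¹ - 1 ≠ 0 := sub_ne_zero.2 hxi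
  have hD : (1:ℂ) - ζ N ^ t * ζ N ^ t ≠ 0 := sub_ne_zero.2 (Ne.symm hx)
  have hinv : (ζ N ^ t * ζ N ^ t)⁻¹ - 1 = (1 - ζ N ^ t * ζ N ^ t) / (ζ N ^ t * ζ N ^ t) := by
    field_simp
  rw [hinv, div_div_eq_mul_div]
  field_simp
  ring_nf
  rw [show (-1 + (ζ N ^ t)^2) = -(1 - (ζ N ^ t)^2) by ring, inv_neg]
  ring

lemma keyEntry (N M : ℕ) (hM : N = 2*M) (hM0 : 0 < M) (a b a' b' : ℕ)
    (ha : a < N) (hb : b < N) (ha' : a' = (N - a) % N) (hb' : b' = (N - b) % N) :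
    ζ N ^ (a' : ℤ) * (SS M a' b' * hsum N M ((a' : ℤ) - 2*(b' : ℤ))) * ζ N ^ (-(2*(b' : ℤ)))
      = ζ N ^ (a : ℤ) * (SS M a b * hsum N M ((a : ℤ) - 2*(b : ℤ))) * ζ N ^ (-(2*(b : ℤ))) := by
  have hN : 0 < N := by omega
  have hz := zeta_ne_zero N
  have haa : (a = 0 ∧ a' = 0) ∨ (0 < a ∧ a' = N - a) := by
    rcases Nat.eq_zero_or_pos a with h | h
    · exact Or.inl ⟨h, by simp [ha', h]⟩
    · exact Or.inr ⟨h, by rw [ha', Nat.mod_eq_of_lt (by omega)]⟩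
  have hbb : (b = 0 ∧ b' = 0) ∨ (0 < b ∧ b' = N - b) := by
    rcases Nat.eq_zero_or_pos b with h | h
    · exact Or.inl ⟨h, by simp [hb', h]⟩
    · exact Or.inr ⟨h, by rw [hb', Nat.mod_eq_of_lt (by omega)]⟩
  have ha'lt : a' < N := by rcases haa with ⟨_,h⟩|⟨_,h⟩ <;> omega
  have hb'lt : b' < N := by rcases hbb with ⟨_,h⟩|⟨_,h⟩ <;> omega
  have collapse : ∀ (α β : ℤ) (w : ℂ),
      ζ N ^ α * w * ζ N ^ (-(2*β)) = ζ N ^ (α - 2*β) * w := by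
    intro α β w
    rw [show α - 2*β = α + (-(2*β)) by ring, zpow_add₀ hz]
    ring
  rw [collapse, collapse]
  have hts : (N:ℤ) ∣ (((a':ℤ) - 2*b') + ((a:ℤ) - 2*b)) := by
    rcases haa with ⟨h1, h2⟩ | ⟨h1, h2⟩ <;> rcases hbb with ⟨h3, h4⟩ | ⟨h3, h4⟩
    · exact ⟨0, by omega⟩
    · exact ⟨-2, by omega⟩
    · exact ⟨1, by omega⟩
    · exact ⟨-1, by omega⟩
  rcases Nat.even_or_odd a with hpar | hpar
  · -- a even
    have hae : a % 2 = 0 := Nat.even_iff.1 hpar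
    have ha'e : a' % 2 = 0 := by rcases haa with ⟨_,h⟩|⟨_,h⟩ <;> omega
    by_cases hdvd : (N:ℤ) ∣ ((a:ℤ) - 2*b)
    · have hdvd' : (N:ℤ) ∣ ((a':ℤ) - 2*b') := by
        have h := dvd_sub hts hdvd
        simpa using h
      rw [hsum_of_dvd N M hN _ hdvd, hsum_of_dvd N M hN _ hdvd']
      obtain ⟨j, hj⟩ := hdvd
      have hj2 : j = 0 ∨ j = -1 := by
        have e1 : -2*(N:ℤ) < (N:ℤ)*j := by omega
        have e2 : (N:ℤ)*j < N := by omega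
        by_contra hcon
        push_neg at hcon
        obtain ⟨c1, c2⟩ := hcon
        rcases lt_or_ge j 0 with h | h
        · have h3 : j ≤ -2 := by omega
          nlinarith
        · have h3 : 1 ≤ j := by omega
          nlinarith
      rcases hj2 with rfl | rfl
      · -- t = 0, a = 2b
        have ht0 : (a:ℤ) - 2*b = 0 := by omega
        rcases Nat.eq_zero_or_pos b with hb0 | hbpos
        · have ha0 : a = 0 := by omega
          have ha'0 : a' = 0 := by rcases haa with ⟨_,h⟩|⟨h,_⟩ <;> omega
          have hb'0 : b' = 0 := by rcases hbb with ⟨_,h⟩|⟨h,_⟩ <;> omega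
          rw [ha'0, hb'0, ha0, hb0]
        · have hab : a = 2*b := by omega
          have hbM : b < M := by omega
          have ha2 : 0 < a := by omega
          have ha'v : a' = N - a := by rcases haa with ⟨h,_⟩|⟨_,h⟩ <;> omega
          have hb'v : b' = N - b := by rcases hbb with ⟨h,_⟩|⟨_,h⟩ <;> omega
          have hSb : SS M a b = rr M := by rw [SS, if_pos hbM]
          have hSb' : SS M a' b' = -(rr M) := by
            rw [SS, if_neg (by omega),
              Even.neg_one_pow (Nat.even_iff.2 (show a' % 2 = 0 by omega))]
            ring
          have ht' : (a':ℤ) - 2*b' = -(N:ℤ) := by omega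
          rw [ht', ht0, hSb, hSb', zpow_zero, zpow_neg, zeta_pow_N N hN]
          norm_num
      · -- t = -N
        have htN : (a:ℤ) - 2*b = -(N:ℤ) := by omega
        rcases Nat.eq_zero_or_pos a with ha0 | hapos
        · have hbM : b = M := by omega
          have ha'0 : a' = 0 := by rcases haa with ⟨_,h⟩|⟨h,_⟩ <;> omega
          have hb'v : b' = b := by rcases hbb with ⟨h,_⟩|⟨_,h⟩ <;> omega
          rw [ha'0, hb'v, ha0]
        · have hbM : M < b := by omega
          have ha'v : a' = N - a := by rcases haa with ⟨h,_⟩|⟨_,h⟩ <;> omega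
          have hb'v : b' = N - b := by rcases hbb with ⟨h,_⟩|⟨_,h⟩ <;> omega
          have hSb : SS M a b = -(rr M) := by
            rw [SS, if_neg (by omega), Even.neg_one_pow (Nat.even_iff.2 hae)]
            ring
          have hSb' : SS M a' b' = rr M := by rw [SS, if_pos (by omega)]
          have ht'0 : (a':ℤ) - 2*b' = 0 := by omega
          rw [ht'0, htN, hSb, hSb', zpow_zero, zpow_neg, zeta_pow_N N hN]
          norm_num
    · -- ¬ dvd : both sums vanish
      have hdvd' : ¬ (N:ℤ) ∣ ((a':ℤ) - 2*b') := fun hc => hdvd (by simpa using dvd_sub hts hc)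
      rw [hsum_even_eq_zero N M hM hM0 _ (by omega) hdvd,
        hsum_even_eq_zero N M hM hM0 _ (by omega) hdvd']
      ring
  · -- a odd
    have hao : a % 2 = 1 := Nat.odd_iff.1 hpar
    have hapos : 0 < a := by omega
    have ha'v : a' = N - a := by rcases haa with ⟨h,_⟩|⟨_,h⟩ <;> omega
    have hto : ((a:ℤ) - 2*b) % 2 = 1 := by omega
    have ht'cases : ((a':ℤ) - 2*b') = -((a:ℤ) - 2*b) + N
        ∨ ((a':ℤ) - 2*b') = -((a:ℤ) - 2*b) - N := by
      rcases hbb with ⟨h1,h2⟩|⟨h1,h2⟩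
      · left; omega
      · right; omega
    have hSb : SS M a b = rr M := by
      rw [SS]; split
      · rfl
      · rw [Odd.neg_one_pow hpar]; ring
    have hSb' : SS M a' b' = rr M := by
      rw [SS]; split
      · rfl
      · rw [Odd.neg_one_pow (Nat.odd_iff.2 (show a' % 2 = 1 by omega))]; ring
    rw [hSb, hSb']
    exact oddStep N M hM hM0 _ _ hto ht'cases

lemma dftEntry_half (N M : ℕ) (hM : N = 2*M) (hM0 : 0 < M) (a b : ℕ) :
    dftEntry M a b = rr M * ζ N ^ (-(4*(a:ℤ)*b)) := by
  have hN : 0 < N := by omega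
  have hMc : (M:ℂ) ≠ 0 := Nat.cast_ne_zero.2 hM0.ne'
  have hNc : (N:ℂ) ≠ 0 := Nat.cast_ne_zero.2 hN.ne'
  rw [dftEntry, rr, zeta_zpow]
  congr 1
  congr 1
  have hNM : (N:ℂ) = 2*M := by push_cast [hM]; ring
  field_simp [hNM]
  push_cast; rw [hNM]; ring

lemma dftEntry_full (N : ℕ) (a b : ℕ) :
    dftEntry N a b = ((Real.sqrt N : ℝ) : ℂ)⁻¹ * ζ N ^ (-(2*(a:ℤ)*b)) := by
  rw [dftEntry, zeta_zpow]
  congr 2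
  push_cast
  ring

lemma gEval (N M : ℕ) (hM : N = 2*M) (hM0 : 0 < M) (m n : Fin N) :
    ∑ k : Fin N, ζ N ^ (2*((m:ℕ):ℤ)*((k:ℕ):ℤ)) * Dmat N k n
      = SS M (m:ℕ) (n:ℕ) * hsum N M (((m:ℕ):ℤ) - 2*((n:ℕ):ℤ)) := by
  have hN : 0 < N := by omega
  have hz := zeta_ne_zero N
  have hN2 : N / 2 = M := by omega
  set t : ℤ := ((m:ℕ):ℤ) - 2*((n:ℕ):ℤ) with ht
  -- ℕ-indexed summand
  have hstep : ∀ k : Fin N, ζ N ^ (2*((m:ℕ):ℤ)*((k:ℕ):ℤ)) * Dmat N k n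
      = (fun k0 : ℕ => ζ N ^ (2*((m:ℕ):ℤ)*(k0:ℤ)) *
          (if k0 < M ∧ (n:ℕ) < M then rr M * ζ N ^ (-(4*(k0:ℤ)*((n:ℕ):ℤ)))
           else if M ≤ k0 ∧ M ≤ (n:ℕ) then
             -(rr M * ζ N ^ (-(4*((k0 - M : ℕ):ℤ)*(((n:ℕ) - M : ℕ):ℤ))))
           else 0)) (k:ℕ) := by
    intro k
    simp only [Dmat, Matrix.of_apply, hN2]
    congr 1
    split
    · rw [dftEntry_half N M hM hM0]
    · split
      · rw [dftEntry_half N M hM hM0]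
      · rfl
  calc ∑ k : Fin N, ζ N ^ (2*((m:ℕ):ℤ)*((k:ℕ):ℤ)) * Dmat N k n
      = ∑ k0 ∈ Finset.range N, (fun k0 : ℕ => ζ N ^ (2*((m:ℕ):ℤ)*(k0:ℤ)) *
          (if k0 < M ∧ (n:ℕ) < M then rr M * ζ N ^ (-(4*(k0:ℤ)*((n:ℕ):ℤ)))
           else if M ≤ k0 ∧ M ≤ (n:ℕ) then
             -(rr M * ζ N ^ (-(4*((k0 - M : ℕ):ℤ)*(((n:ℕ) - M : ℕ):ℤ))))
           else 0)) k0 := by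
        rw [← Fin.sum_univ_eq_sum_range]
        exact Finset.sum_congr rfl fun k _ => hstep k
    _ = SS M (m:ℕ) (n:ℕ) * hsum N M t := by
        rw [show Finset.range N = Finset.range (M + M) by rw [show M + M = N by omega],
          Finset.sum_range_add, hsum, Finset.mul_sum]
        rcases Nat.lt_or_ge (n:ℕ) M with hn | hn
        · -- upper block
          have h2 : ∀ j ∈ Finset.range M, (fun k0 : ℕ => ζ N ^ (2*((m:ℕ):ℤ)*(k0:ℤ)) *
              (if k0 < M ∧ (n:ℕ) < M then rr M * ζ N ^ (-(4*(k0:ℤ)*((n:ℕ):ℤ)))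
               else if M ≤ k0 ∧ M ≤ (n:ℕ) then
                 -(rr M * ζ N ^ (-(4*((k0 - M : ℕ):ℤ)*(((n:ℕ) - M : ℕ):ℤ)))) else 0)) (M + j)
              = 0 := by
            intro j hj
            beta_reduce
            rw [if_neg (by omega), if_neg (by omega), mul_zero]
          rw [Finset.sum_congr rfl h2, Finset.sum_const, smul_zero, add_zero]
          apply Finset.sum_congr rfl
          intro j hj
          beta_reduce
          rw [Finset.mem_range] at hj
          rw [if_pos ⟨hj, hn⟩, SS, if_pos hn]
          rw [← zpow_natCast (ζ N ^ (2*t)) j, ← zpow_mul]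
          rw [show ζ N ^ (2*((m:ℕ):ℤ)*(j:ℤ)) * (rr M * ζ N ^ (-(4*(j:ℤ)*((n:ℕ):ℤ))))
              = rr M * (ζ N ^ (2*((m:ℕ):ℤ)*(j:ℤ)) * ζ N ^ (-(4*(j:ℤ)*((n:ℕ):ℤ)))) by ring]
          rw [← zpow_add₀ hz]
          congr 1
          rw [ht]; ring
        · -- lower block
          have h1 : ∀ j ∈ Finset.range M, (fun k0 : ℕ => ζ N ^ (2*((m:ℕ):ℤ)*(k0:ℤ)) *
              (if k0 < M ∧ (n:ℕ) < M then rr M * ζ N ^ (-(4*(k0:ℤ)*((n:ℕ):ℤ)))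
               else if M ≤ k0 ∧ M ≤ (n:ℕ) then
                 -(rr M * ζ N ^ (-(4*((k0 - M : ℕ):ℤ)*(((n:ℕ) - M : ℕ):ℤ)))) else 0)) j
              = 0 := by
            intro j hj
            beta_reduce
            rw [Finset.mem_range] at hj
            rw [if_neg (by omega), if_neg (by omega), mul_zero]
          rw [Finset.sum_congr rfl h1, Finset.sum_const, smul_zero, zero_add]
          apply Finset.sum_congr rfl
          intro j hj
          beta_reduce
          rw [Finset.mem_range] at hj
          rw [if_neg (by omega), if_pos ⟨by omega, hn⟩, SS, if_neg (by omega)]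
          have hsub1 : ((M + j - M : ℕ):ℤ) = (j:ℤ) := by omega
          have hsub2 : (((n:ℕ) - M : ℕ):ℤ) = ((n:ℕ):ℤ) - M := by omega
          rw [hsub1, hsub2]
          rw [← zpow_natCast (ζ N ^ (2*t)) j, ← zpow_mul]
          -- LHS: ζ^(2m(M+j)) * -(rr M * ζ^(-4j(n-M)))
          rw [show ζ N ^ (2*((m:ℕ):ℤ)*((M + j : ℕ):ℤ)) *
                -(rr M * ζ N ^ (-(4*(j:ℤ)*(((n:ℕ):ℤ) - M))))
              = -(rr M) * (ζ N ^ (2*((m:ℕ):ℤ)*((M + j : ℕ):ℤ)) *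
                  ζ N ^ (-(4*(j:ℤ)*(((n:ℕ):ℤ) - M)))) by ring]
          rw [← zpow_add₀ hz]
          -- RHS: -(-1)^m * rr M * ζ^(2tj)
          have hNm : ((-1:ℂ)) ^ ((m:ℕ)) * ζ N ^ (2*t*(j:ℤ))
              = ζ N ^ ((N:ℤ)*((m:ℕ):ℤ) + 2*t*(j:ℤ)) := by
            rw [zpow_add₀ hz, zeta_zpow_N_mul N hN, zpow_natCast]
          rw [show -((-1:ℂ)) ^ ((m:ℕ)) * rr M * ζ N ^ (2*t*(j:ℤ))
              = -(rr M) * ((-1:ℂ) ^ ((m:ℕ)) * ζ N ^ (2*t*(j:ℤ))) by ring, hNm]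
          congr 1
          apply zeta_congr N hN _ _ (j:ℤ)
          push_cast [hM, ht]
          ring

def Cmat (N : ℕ) : Matrix (Fin N) (Fin N) ℂ :=
  Matrix.of fun m n : Fin N => ((Real.sqrt N : ℝ) : ℂ)⁻¹ * ζ N ^ (2*((m:ℕ):ℤ)*((n:ℕ):ℤ))

lemma dft_mul_C (N : ℕ) (hN : 0 < N) : dftMatrix N * Cmat N = 1 := by
  have hz := zeta_ne_zero N
  have hNR : (0:ℝ) ≤ (N:ℝ) := Nat.cast_nonneg N
  have hNc : (N:ℂ) ≠ 0 := Nat.cast_ne_zero.2 hN.ne'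
  ext m n
  rw [Matrix.mul_apply, Matrix.one_apply]
  have hterm : ∀ k : Fin N, dftMatrix N m k * Cmat N k n
      = (((Real.sqrt N : ℝ) : ℂ)⁻¹ * ((Real.sqrt N : ℝ) : ℂ)⁻¹) *
        (fun k0 : ℕ => (ζ N ^ (2*(((n:ℕ):ℤ) - ((m:ℕ):ℤ)))) ^ k0) (k:ℕ) := by
    intro k
    beta_reduce
    rw [dftMatrix, Matrix.of_apply, dftEntry_full, Cmat, Matrix.of_apply]
    rw [← zpow_natCast (ζ N ^ (2*(((n:ℕ):ℤ) - ((m:ℕ):ℤ)))) (k:ℕ), ← zpow_mul]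
    rw [show ((Real.sqrt N : ℝ) : ℂ)⁻¹ * ζ N ^ (-(2*((m:ℕ):ℤ)*((k:ℕ):ℤ))) *
          (((Real.sqrt N : ℝ) : ℂ)⁻¹ * ζ N ^ (2*((k:ℕ):ℤ)*((n:ℕ):ℤ)))
        = (((Real.sqrt N : ℝ) : ℂ)⁻¹ * ((Real.sqrt N : ℝ) : ℂ)⁻¹) *
          (ζ N ^ (-(2*((m:ℕ):ℤ)*((k:ℕ):ℤ))) * ζ N ^ (2*((k:ℕ):ℤ)*((n:ℕ):ℤ))) by ring]
    rw [← zpow_add₀ hz]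
    congr 2
    ring
  rw [Finset.sum_congr rfl fun k _ => hterm k, ← Finset.mul_sum,
    Fin.sum_univ_eq_sum_range (fun k0 : ℕ => (ζ N ^ (2*(((n:ℕ):ℤ) - ((m:ℕ):ℤ)))) ^ k0) N]
  have hrt : ((Real.sqrt N : ℝ) : ℂ)⁻¹ * ((Real.sqrt N : ℝ) : ℂ)⁻¹ = ((N:ℂ))⁻¹ := by
    rw [← mul_inv, ← Complex.ofReal_mul, Real.mul_self_sqrt hNR, Complex.ofReal_natCast]
  by_cases hmn : m = n
  · subst hmn
    rw [if_pos rfl]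
    simp only [sub_self, mul_zero, zpow_zero, one_pow, Finset.sum_const,
      Finset.card_range, nsmul_eq_mul, mul_one, hrt]
    exact inv_mul_cancel₀ hNc
  · rw [if_neg hmn]
    have hne : ¬ ((N:ℤ) ∣ (((n:ℕ):ℤ) - ((m:ℕ):ℤ))) := by
      have hmlt := m.isLt
      have hnlt := n.isLt
      intro ⟨c, hc⟩
      have h1 : -(N:ℤ) < (N:ℤ)*c := by omega
      have h2 : (N:ℤ)*c < N := by omega
      have hc0 : c = 0 := by
        by_contra hcc
        rcases lt_or_ge c 0 with h | h
        · have : c ≤ -1 := by omega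
          nlinarith
        · have : 1 ≤ c := by omega
          nlinarith
      apply hmn
      rw [hc0, mul_zero] at hc
      have : ((m:ℕ):ℤ) = ((n:ℕ):ℤ) := by omega
      exact Fin.ext (by exact_mod_cast this)
    have hx1 : ζ N ^ (2*(((n:ℕ):ℤ) - ((m:ℕ):ℤ))) ≠ 1 :=
      fun hc => hne ((zeta_two_zpow_eq_one_iff N hN _).1 hc)
    have hgeom := geom_sum_mul (ζ N ^ (2*(((n:ℕ):ℤ) - ((m:ℕ):ℤ)))) N
    have hXN : (ζ N ^ (2*(((n:ℕ):ℤ) - ((m:ℕ):ℤ)))) ^ N = 1 := by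
      rw [← zpow_natCast (ζ N ^ (2*(((n:ℕ):ℤ) - ((m:ℕ):ℤ)))) N, ← zpow_mul]
      rw [show 2*(((n:ℕ):ℤ) - ((m:ℕ):ℤ))*(N:ℤ) = (N:ℤ)*(2*(((n:ℕ):ℤ) - ((m:ℕ):ℤ))) by ring,
        zeta_zpow_N_mul N hN]
      exact Even.neg_one_zpow ⟨(((n:ℕ):ℤ) - ((m:ℕ):ℤ)), by ring⟩
    rw [hXN, sub_self] at hgeom
    have hsum0 := (mul_eq_zero.1 hgeom).resolve_right (sub_ne_zero.2 hx1)
    rw [hsum0, mul_zero]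

lemma dft_inv (N : ℕ) (hN : 0 < N) : (dftMatrix N)⁻¹ = Cmat N :=
  Matrix.inv_eq_right_inv (dft_mul_C N hN)

lemma Z_diag (N : ℕ) : Zmat N = Matrix.diagonal (fun n : Fin N => ζ N ^ (((n:ℕ):ℤ))) := by
  unfold Zmat
  exact congrArg Matrix.diagonal (funext fun n => by
    rw [zeta_zpow]; congr 1)

lemma Zsq_inv (N : ℕ) (hN : 0 < N) :
    (Zmat N ^ 2)⁻¹ = Matrix.diagonal (fun n : Fin N => ζ N ^ (-(2*((n:ℕ):ℤ)))) := by
  have hz := zeta_ne_zero N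
  apply Matrix.inv_eq_right_inv
  rw [Z_diag, pow_two, Matrix.diagonal_mul_diagonal, Matrix.diagonal_mul_diagonal]
  rw [show (1 : Matrix (Fin N) (Fin N) ℂ) = Matrix.diagonal (fun _ => 1) from
    (Matrix.diagonal_one).symm]
  exact congrArg Matrix.diagonal (funext fun n => by
    rw [← zpow_add₀ hz, ← zpow_add₀ hz,
      show ((n:ℕ):ℤ) + ((n:ℕ):ℤ) + -(2*((n:ℕ):ℤ)) = 0 by ring, zpow_zero])

lemma P_apply (N : ℕ) [NeZero N] (i j : Fin N) :
    parityPermMatrix N i j = if j = -i then 1 else 0 := by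
  rw [parityPermMatrix, Matrix.of_apply]
  congr 1
  rw [eq_iff_iff]
  constructor
  · intro h
    have h2 : i + j = 0 := by
      apply Fin.ext
      rw [Fin.add_def]
      simpa using h
    rw [eq_comm, neg_eq_iff_add_eq_zero]
    exact h2
  · intro h
    rw [eq_comm, neg_eq_iff_add_eq_zero] at h
    have := congrArg Fin.val h
    rw [Fin.add_def] at this
    simpa using this

lemma P_mul (N : ℕ) [NeZero N] (X : Matrix (Fin N) (Fin N) ℂ) :
    parityPermMatrix N * X = Matrix.of (fun i j => X (-i) j) := by
  ext i j
  rw [Matrix.mul_apply, Matrix.of_apply]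
  rw [Finset.sum_congr rfl fun k _ => by rw [P_apply, ite_mul, one_mul, zero_mul]]
  rw [Finset.sum_ite_eq' Finset.univ (-i) (fun k => X k j)]
  simp

lemma mul_P (N : ℕ) [NeZero N] (X : Matrix (Fin N) (Fin N) ℂ) :
    X * parityPermMatrix N = Matrix.of (fun i j => X i (-j)) := by
  ext i j
  rw [Matrix.mul_apply, Matrix.of_apply]
  have hPs : ∀ k : Fin N, parityPermMatrix N k j = if k = -j then 1 else 0 := by
    intro k
    rw [P_apply]
    congr 1
    rw [eq_iff_iff]
    constructor
    · intro h; rw [h, neg_neg]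
    · intro h; rw [h, neg_neg]
  rw [Finset.sum_congr rfl fun k _ => by rw [hPs k, mul_ite, mul_one, mul_zero]]
  rw [Finset.sum_ite_eq' Finset.univ (-j) (fun k => X i k)]
  simp

theorem bakerMatrix_parity_symmetry' (N : ℕ) (hN : 0 < N) (hNeven : Even N) :
    parityPermMatrix N * bakerMatrix N * parityPermMatrix N = bakerMatrix N := by
  haveI : NeZero N := ⟨hN.ne'⟩
  obtain ⟨M, hM⟩ : ∃ M, N = 2*M := by
    obtain ⟨c, hc⟩ := hNeven
    exact ⟨c, by omega⟩
  have hM0 : 0 < M := by omega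
  have hz := zeta_ne_zero N
  rw [bakerMatrix, dft_inv N hN, Zsq_inv N hN, Z_diag N]
  set B := Matrix.diagonal (fun n : Fin N => ζ N ^ (((n:ℕ):ℤ))) * Cmat N * Dmat N *
    Matrix.diagonal (fun n : Fin N => ζ N ^ (-(2*((n:ℕ):ℤ)))) with hB
  have hEntry : ∀ i j : Fin N, B i j
      = ((Real.sqrt N : ℝ) : ℂ)⁻¹ *
        (ζ N ^ (((i:ℕ):ℤ)) * (SS M (i:ℕ) (j:ℕ) * hsum N M (((i:ℕ):ℤ) - 2*((j:ℕ):ℤ)))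
          * ζ N ^ (-(2*((j:ℕ):ℤ)))) := by
    intro i j
    rw [hB, Matrix.mul_diagonal, Matrix.mul_apply]
    rw [Finset.sum_congr rfl fun k _ => by
      rw [Matrix.diagonal_mul, Cmat, Matrix.of_apply]]
    rw [show (∑ k : Fin N, ζ N ^ (((i:ℕ):ℤ)) *
          (((Real.sqrt N : ℝ) : ℂ)⁻¹ * ζ N ^ (2*((i:ℕ):ℤ)*((k:ℕ):ℤ))) * Dmat N k j)
        = ζ N ^ (((i:ℕ):ℤ)) * ((Real.sqrt N : ℝ) : ℂ)⁻¹ *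
          (∑ k : Fin N, ζ N ^ (2*((i:ℕ):ℤ)*((k:ℕ):ℤ)) * Dmat N k j) by
      rw [Finset.mul_sum]
      exact Finset.sum_congr rfl fun k _ => by ring]
    rw [gEval N M hM hM0 i j]
    ring
  rw [P_mul, mul_P]
  ext i j
  rw [Matrix.of_apply, Matrix.of_apply, hEntry, hEntry]
  congr 1
  have hvi : ((-i : Fin N) : ℕ) = (N - (i:ℕ)) % N := by
    rw [Fin.neg_def]
  have hvj : ((-j : Fin N) : ℕ) = (N - (j:ℕ)) % N := by
    rw [Fin.neg_def]
  exact keyEntry N M hM hM0 (i:ℕ) (j:ℕ) ((-i : Fin N) : ℕ) ((-j : Fin N) : ℕ)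
    i.isLt j.isLt hvi hvj

end BQtest

/-- Parity symmetry of the quantum baker matrix: `P 𝖡 P = 𝖡`. -/
theorem bakerMatrix_parity_symmetry (N : ℕ) (hN : 0 < N) (hNeven : Even N) :
    parityPermMatrix N * bakerMatrix N * parityPermMatrix N = bakerMatrix N :=
  BQtest.bakerMatrix_parity_symmetry' N hN hNeven

end
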